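/- Assume ‖x_i‖₂ ≤ 1 for all i and that K is positive definite with least eigenvalue λ₀ > 0. There exists a constant c > 0, depending only on ℓ, such that if M ≥ c n² log(2n/δ)/λ₀², then with probability at least 1 − δ/2 over the random initialization of W₀ (i.i.d. N(0,1) entries), the least eigenvalue of the Gram matrix satisfies λ_min(G_{W₀}) ≥ (3/4) λ₀. -/

import Mathlib

open Matrix MeasureTheory ProbabilityTheory
open scoped ENNReal

/-- Euclidean norm of a real vector. -/
noncomputable def eNorm {n : Type*} [Fintype n] (v : n → ℝ) : ℝ :=
  Real.sqrt (∑ i, v i ^ 2)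

/-- The Gram matrix of the neural tangent kernel of the two-layer network at parameter `W`:
`(G_W)_{ij} = (1/M) ∑_r x_iᵀx_j σ'(w_r·x_i) σ'(w_r·x_j)`. -/
noncomputable def gramNTK (M d n : ℕ) (σ' : ℝ → ℝ) (x : Fin n → Fin d → ℝ)
    (W : Fin M → Fin d → ℝ) : Matrix (Fin n) (Fin n) ℝ :=
  Matrix.of fun i j => (M : ℝ)⁻¹ * ∑ r, (x i ⬝ᵥ x j) * σ' (W r ⬝ᵥ x i) * σ' (W r ⬝ᵥ x j)

/-- The NTK limit kernel matrix `K_{ij} = E_{w∼N(0,I_d)}[x_iᵀx_j σ'(w·x_i)σ'(w·x_j)]`. -/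
noncomputable def ntkKernel (d n : ℕ) (σ' : ℝ → ℝ) (x : Fin n → Fin d → ℝ) :
    Matrix (Fin n) (Fin n) ℝ :=
  Matrix.of fun i j =>
    ∫ w : Fin d → ℝ, (x i ⬝ᵥ x j) * σ' (w ⬝ᵥ x i) * σ' (w ⬝ᵥ x j)
      ∂(Measure.pi fun _ : Fin d => gaussianReal 0 1)

/-- i.i.d. standard Gaussian initialization of the first-layer weights. -/
noncomputable def gaussInit (M d : ℕ) : Measure (Fin M → Fin d → ℝ) :=
  Measure.pi fun _ => Measure.pi fun _ => gaussianReal 0 1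

section Hoeffding
open Real
variable {E : Type*} [MeasurableSpace E] (μ : Measure E) [IsProbabilityMeasure μ]

lemma integral_pi_pow (M : ℕ) (h : E → ℝ) :
    ∫ w : Fin M → E, ∏ r, h (w r) ∂(Measure.pi fun _ : Fin M => μ)
      = (∫ x, h x ∂μ) ^ M := by
  letI : MeasureSpace E := ⟨μ⟩
  haveI : SigmaFinite (volume : Measure E) := inferInstance
  simpa [volume_pi] using MeasureTheory.integral_fintype_prod_eq_pow (ι := Fin M) h (μ := μ)

lemma mgf_le_of_bounded (g : E → ℝ) (hgm : Measurable g) {B : ℝ} (hB : 0 < B)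
    (hgB : ∀ x, |g x| ≤ B) (hmean : ∫ x, g x ∂μ = 0) (t : ℝ) :
    ∫ x, exp (t * g x) ∂μ ≤ exp (t ^ 2 * B ^ 2 / 2) := by
  have hgi : Integrable g μ :=
    (integrable_const B).mono' hgm.aestronglyMeasurable
      (Filter.Eventually.of_forall fun x => by
        simpa [Real.norm_eq_abs] using hgB x)
  set c1 : ℝ := (exp (t * B) + exp (-(t * B))) / 2 with hc1
  set c2 : ℝ := (exp (t * B) - exp (-(t * B))) / (2 * B) with hc2
  have hpt : ∀ x, exp (t * g x) ≤ c1 + c2 * g x := by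
    intro x
    have hx1 : -B ≤ g x := (abs_le.1 (hgB x)).1
    have hx2 : g x ≤ B := (abs_le.1 (hgB x)).2
    have hBne : B ≠ 0 := hB.ne'
    have ha : (0:ℝ) ≤ (B - g x) / (2 * B) := by
      apply div_nonneg (by linarith) (by linarith)
    have hb : (0:ℝ) ≤ (B + g x) / (2 * B) := by
      apply div_nonneg (by linarith) (by linarith)
    have hab : (B - g x) / (2 * B) + (B + g x) / (2 * B) = 1 := by
      field_simp
      ring
    have hcx := convexOn_exp.2 (Set.mem_univ (-(t * B))) (Set.mem_univ (t * B)) ha hb hab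
    simp only [smul_eq_mul] at hcx
    have harg : (B - g x) / (2 * B) * (-(t * B)) + (B + g x) / (2 * B) * (t * B) = t * g x := by
      rw [div_mul_eq_mul_div, div_mul_eq_mul_div, ← add_div,
        div_eq_iff (by positivity : (2*B) ≠ 0)]
      ring
    rw [harg] at hcx
    have hrhs : (B - g x) / (2 * B) * exp (-(t * B)) + (B + g x) / (2 * B) * exp (t * B)
        = c1 + c2 * g x := by
      rw [hc1, hc2]
      field_simp
      ring
    rw [hrhs] at hcx
    exact hcx
  have hei : Integrable (fun x => exp (t * g x)) μ :=
    (integrable_const (exp (|t| * B))).mono'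
      ((hgm.const_mul t).exp).aestronglyMeasurable
      (Filter.Eventually.of_forall fun x => by
        rw [Real.norm_eq_abs, abs_exp]
        apply exp_le_exp.2
        calc t * g x ≤ |t * g x| := le_abs_self _
          _ = |t| * |g x| := abs_mul _ _
          _ ≤ |t| * B := by
              exact mul_le_mul_of_nonneg_left (hgB x) (abs_nonneg t))
  calc ∫ x, exp (t * g x) ∂μ ≤ ∫ x, (c1 + c2 * g x) ∂μ :=
        integral_mono hei ((integrable_const c1).add (hgi.const_mul c2))
          (fun x => hpt x)
    _ = c1 + c2 * ∫ x, g x ∂μ := by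
        rw [integral_add (integrable_const c1) (hgi.const_mul c2),
          integral_const, integral_const_mul]
        simp
    _ = Real.cosh (t * B) := by rw [hmean, Real.cosh_eq]; ring
    _ ≤ exp ((t * B) ^ 2 / 2) := Real.cosh_le_exp_half_sq _
    _ = exp (t ^ 2 * B ^ 2 / 2) := by rw [mul_pow]

/-- One-sided Hoeffding inequality for sums of iid bounded centered variables. -/
lemma hoeffding_one_sided (M : ℕ) (g : E → ℝ) (hgm : Measurable g) {B : ℝ} (hB : 0 < B)
    (hgB : ∀ x, |g x| ≤ B) (hmean : ∫ x, g x ∂μ = 0) {ε : ℝ} (hε : 0 ≤ ε) :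
    (Measure.pi fun _ : Fin M => μ) {w | (M : ℝ) * ε ≤ ∑ r, g (w r)}
      ≤ ENNReal.ofReal (exp (-(M : ℝ) * ε ^ 2 / (2 * B ^ 2))) := by
  set Pm := Measure.pi fun _ : Fin M => μ with hPm
  haveI : IsProbabilityMeasure Pm := by rw [hPm]; infer_instance
  set t : ℝ := ε / B ^ 2 with htdef
  have ht0 : 0 ≤ t := div_nonneg hε (by positivity)
  set X : (Fin M → E) → ℝ := fun w => ∑ r, g (w r) with hX
  have hXm : Measurable X := by
    apply Finset.measurable_sum
    intro r _
    exact hgm.comp (measurable_pi_apply r)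
  have hint : Integrable (fun w => exp (t * X w)) Pm := by
    refine (integrable_const (exp (t * (M * B)))).mono'
      ((hXm.const_mul t).exp).aestronglyMeasurable
      (Filter.Eventually.of_forall fun w => ?_)
    rw [Real.norm_eq_abs, abs_exp]
    apply exp_le_exp.2
    apply mul_le_mul_of_nonneg_left _ ht0
    calc X w ≤ ∑ r : Fin M, B := Finset.sum_le_sum fun r _ => (abs_le.1 (hgB _)).2
      _ = M * B := by simp [mul_comm]
  have hch := measure_ge_le_exp_mul_mgf (μ := Pm) (X := X) ((M : ℝ) * ε) ht0 hint
  have hmgf : mgf X Pm t = (∫ x, exp (t * g x) ∂μ) ^ M := by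
    rw [mgf]
    calc ∫ w, exp (t * X w) ∂Pm = ∫ w, ∏ r, exp (t * g (w r)) ∂Pm := by
          congr 1
          ext w
          rw [hX]
          rw [Finset.mul_sum, Real.exp_sum]
      _ = (∫ x, exp (t * g x) ∂μ) ^ M := by rw [hPm]; exact integral_pi_pow μ M (fun x => exp (t * g x))
  have hmgf_le : mgf X Pm t ≤ exp ((M : ℝ) * (t ^ 2 * B ^ 2 / 2)) := by
    rw [hmgf]
    calc (∫ x, exp (t * g x) ∂μ) ^ M ≤ (exp (t ^ 2 * B ^ 2 / 2)) ^ M := by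
          apply pow_le_pow_left₀ (integral_nonneg fun x => (exp_pos _).le)
          exact mgf_le_of_bounded μ g hgm hB hgB hmean t
      _ = exp ((M : ℝ) * (t ^ 2 * B ^ 2 / 2)) := by
          rw [← Real.exp_nat_mul]
  have hfinal : (Pm {w | (M : ℝ) * ε ≤ X w}).toReal
      ≤ exp (-(M : ℝ) * ε ^ 2 / (2 * B ^ 2)) := by
    calc (Pm {w | (M : ℝ) * ε ≤ X w}).toReal
        ≤ exp (-t * ((M : ℝ) * ε)) * mgf X Pm t := hch
      _ ≤ exp (-t * ((M : ℝ) * ε)) * exp ((M : ℝ) * (t ^ 2 * B ^ 2 / 2)) := by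
          apply mul_le_mul_of_nonneg_left hmgf_le (exp_pos _).le
      _ = exp (-(M : ℝ) * ε ^ 2 / (2 * B ^ 2)) := by
          rw [← Real.exp_add]
          congr 1
          rw [htdef]
          field_simp
          ring
  rw [← ENNReal.le_ofReal_iff_toReal_le (measure_ne_top Pm _) (exp_pos _).le] at hfinal
  exact hfinal

/-- Two-sided Hoeffding inequality. -/
lemma hoeffding_two_sided (M : ℕ) (g : E → ℝ) (hgm : Measurable g) {B : ℝ} (hB : 0 < B)
    (hgB : ∀ x, |g x| ≤ B) (hmean : ∫ x, g x ∂μ = 0) {ε : ℝ} (hε : 0 ≤ ε) :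
    (Measure.pi fun _ : Fin M => μ) {w | (M : ℝ) * ε ≤ |∑ r, g (w r)|}
      ≤ ENNReal.ofReal (2 * exp (-(M : ℝ) * ε ^ 2 / (2 * B ^ 2))) := by
  set Pm := Measure.pi fun _ : Fin M => μ with hPm
  have hsub : {w : Fin M → E | (M : ℝ) * ε ≤ |∑ r, g (w r)|}
      ⊆ {w | (M : ℝ) * ε ≤ ∑ r, g (w r)} ∪ {w | (M : ℝ) * ε ≤ ∑ r, (fun y => -g y) (w r)} := by
    intro w hw
    simp only [Set.mem_setOf_eq] at hw ⊢
    rcases le_abs.1 hw with h | h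
    · exact Or.inl h
    · refine Or.inr ?_
      simpa [Finset.sum_neg_distrib] using h
  have h1 := hoeffding_one_sided μ M g hgm hB hgB hmean hε
  have h2 := hoeffding_one_sided μ M (fun y => -g y) (hgm.neg) hB
    (fun x => by simpa using hgB x) (by rw [integral_neg, hmean, neg_zero]) hε
  calc Pm _ ≤ Pm ({w | (M : ℝ) * ε ≤ ∑ r, g (w r)}
        ∪ {w | (M : ℝ) * ε ≤ ∑ r, (fun y => -g y) (w r)}) := measure_mono hsub
    _ ≤ Pm {w | (M : ℝ) * ε ≤ ∑ r, g (w r)}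
        + Pm {w | (M : ℝ) * ε ≤ ∑ r, (fun y => -g y) (w r)} := measure_union_le _ _
    _ ≤ ENNReal.ofReal (exp (-(M : ℝ) * ε ^ 2 / (2 * B ^ 2)))
        + ENNReal.ofReal (exp (-(M : ℝ) * ε ^ 2 / (2 * B ^ 2))) := add_le_add h1 h2
    _ = ENNReal.ofReal (2 * exp (-(M : ℝ) * ε ^ 2 / (2 * B ^ 2))) := by
        rw [← ENNReal.ofReal_add (exp_pos _).le (exp_pos _).le]
        congr 1
        ring

end Hoeffding

set_option maxHeartbeats 2000000 in
/-- If `‖x_i‖₂ ≤ 1` for all `i` and the NTK limit kernel `K` is positive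
definite with least eigenvalue `λ₀ > 0`, then there is a constant `c > 0` depending only on
the derivative bound `ℓ` such that if `M ≥ c n² log(2n/δ)/λ₀²`, with probability at least
`1 − δ/2` over the Gaussian initialization `W₀`, `λ_min(G_{W₀}) ≥ (3/4) λ₀`. -/
theorem gram_least_eigenvalue_at_init (ℓ : ℝ) :
    ∃ c : ℝ, 0 < c ∧
      ∀ (M d n : ℕ) (σ σ' : ℝ → ℝ),
        (∀ t : ℝ, HasDerivAt σ (σ' t) t) →
        (∀ t : ℝ, |σ' t| ≤ ℓ) →
        ∀ x : Fin n → Fin d → ℝ, (∀ i, eNorm (x i) ≤ 1) →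
        ∀ lam₀ : ℝ, 0 < lam₀ →
          (∀ v : Fin n → ℝ,
            lam₀ * ∑ i, v i ^ 2 ≤ v ⬝ᵥ (ntkKernel d n σ' x).mulVec v) →
        ∀ δ : ℝ, 0 < δ → δ < 1 →
          c * n ^ 2 * Real.log (2 * n / δ) / lam₀ ^ 2 ≤ (M : ℝ) →
          ENNReal.ofReal (1 - δ / 2) ≤
            gaussInit M d
              {W | ∀ v : Fin n → ℝ,
                (3 / 4 : ℝ) * lam₀ * ∑ i, v i ^ 2 ≤
                  v ⬝ᵥ (gramNTK M d n σ' x W).mulVec v} := by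
  refine ⟨256 * (ℓ ^ 2 + 1) ^ 2, by positivity, ?_⟩
  intro M d n σ σ' hderiv hb x hx lam₀ hlam hK δ hδ0 hδ1 hM
  haveI : IsProbabilityMeasure (gaussInit M d) := by
    unfold gaussInit; infer_instance
  -- trivial case n = 0
  rcases Nat.eq_zero_or_pos n with hn | hn
  · subst hn
    have huniv : {W : Fin M → Fin d → ℝ | ∀ v : Fin 0 → ℝ,
        (3 / 4 : ℝ) * lam₀ * ∑ i, v i ^ 2 ≤
          v ⬝ᵥ (gramNTK M d 0 σ' x W).mulVec v} = Set.univ := by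
      apply Set.eq_univ_of_forall
      intro W v
      simp [dotProduct]
    rw [huniv, measure_univ]
    exact ENNReal.ofReal_le_one.2 (by linarith)
  -- main case
  have hℓ0 : 0 ≤ ℓ := (abs_nonneg _).trans (hb 0)
  set B : ℝ := 2 * (ℓ ^ 2 + 1) with hBdef
  have hB : 0 < B := by positivity
  have hσ'm : Measurable σ' := by
    have h : σ' = deriv σ := funext fun t => ((hderiv t).deriv).symm
    rw [h]; exact measurable_deriv σ
  set ν : Measure (Fin d → ℝ) := Measure.pi fun _ : Fin d => gaussianReal 0 1 with hν
  haveI : IsProbabilityMeasure ν := by rw [hν]; infer_instance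
  set φ : Fin n → Fin n → (Fin d → ℝ) → ℝ :=
    fun i j w => (x i ⬝ᵥ x j) * σ' (w ⬝ᵥ x i) * σ' (w ⬝ᵥ x j) with hφdef
  have hφm : ∀ i j, Measurable (φ i j) := by
    intro i j
    have hdot : ∀ (y : Fin d → ℝ), Measurable fun w : Fin d → ℝ => w ⬝ᵥ y := by
      intro y
      unfold dotProduct
      exact Finset.measurable_sum _ fun k _ => (measurable_pi_apply k).mul_const _
    exact ((measurable_const.mul (hσ'm.comp (hdot (x i))))).mul (hσ'm.comp (hdot (x j)))
  have hxsq : ∀ i, ∑ k, x i k ^ 2 ≤ 1 := by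
    intro i
    have h1 := hx i
    unfold eNorm at h1
    have h0 : (0:ℝ) ≤ ∑ k, x i k ^ 2 := Finset.sum_nonneg fun k _ => sq_nonneg _
    nlinarith [Real.sq_sqrt h0, Real.sqrt_nonneg (∑ k, x i k ^ 2)]
  have hdot1 : ∀ i j, |x i ⬝ᵥ x j| ≤ 1 := by
    intro i j
    have h2 : (x i ⬝ᵥ x j) ^ 2 ≤ 1 := by
      have := Finset.sum_mul_sq_le_sq_mul_sq Finset.univ (x i) (x j)
      have hxi := hxsq i
      have hxj := hxsq j
      have h0i : (0:ℝ) ≤ ∑ k, x i k ^ 2 := Finset.sum_nonneg fun k _ => sq_nonneg _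
      have h0j : (0:ℝ) ≤ ∑ k, x j k ^ 2 := Finset.sum_nonneg fun k _ => sq_nonneg _
      unfold dotProduct
      nlinarith
    nlinarith [sq_abs (x i ⬝ᵥ x j), abs_nonneg (x i ⬝ᵥ x j)]
  have hφb : ∀ i j w, |φ i j w| ≤ ℓ ^ 2 := by
    intro i j w
    rw [hφdef]
    simp only
    rw [abs_mul, abs_mul]
    calc |x i ⬝ᵥ x j| * |σ' (w ⬝ᵥ x i)| * |σ' (w ⬝ᵥ x j)|
        ≤ 1 * ℓ * ℓ := by
          apply mul_le_mul _ (hb _) (abs_nonneg _) (by positivity)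
          exact mul_le_mul (hdot1 i j) (hb _) (abs_nonneg _) zero_le_one
      _ = ℓ ^ 2 := by ring
  have hφint : ∀ i j, Integrable (φ i j) ν :=
    fun i j => (integrable_const (ℓ ^ 2)).mono' (hφm i j).aestronglyMeasurable
      (Filter.Eventually.of_forall fun w => by
        simpa [Real.norm_eq_abs] using hφb i j w)
  set K : Fin n → Fin n → ℝ := fun i j => ∫ w, φ i j w ∂ν with hKdef
  have hKeq : ∀ i j, (ntkKernel d n σ' x) i j = K i j := by
    intro i j; rfl
  have hKb : ∀ i j, |K i j| ≤ ℓ ^ 2 := by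
    intro i j
    rw [hKdef]
    calc |∫ w, φ i j w ∂ν| ≤ ∫ w, |φ i j w| ∂ν := by simpa [Real.norm_eq_abs] using norm_integral_le_integral_norm (f := φ i j) (μ := ν)
      _ ≤ ∫ _w, ℓ ^ 2 ∂ν := integral_mono (hφint i j).abs (integrable_const _)
            fun w => hφb i j w
      _ = ℓ ^ 2 := by simp
  -- the centered variables
  set g : Fin n → Fin n → (Fin d → ℝ) → ℝ := fun i j w => φ i j w - K i j with hgdef
  have hgm : ∀ i j, Measurable (g i j) := fun i j => (hφm i j).sub measurable_const
  have hgB : ∀ i j w, |g i j w| ≤ B := by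
    intro i j w
    rw [hgdef]
    simp only
    calc |φ i j w - K i j| ≤ |φ i j w| + |K i j| := abs_sub _ _
      _ ≤ ℓ ^ 2 + ℓ ^ 2 := add_le_add (hφb i j w) (hKb i j)
      _ ≤ B := by rw [hBdef]; nlinarith
  have hgmean : ∀ i j, ∫ w, g i j w ∂ν = 0 := by
    intro i j
    rw [hgdef]
    simp only
    rw [integral_sub (hφint i j) (integrable_const _), integral_const]
    simp [hKdef]
  -- Hoeffding bound for each entry
  set ε : ℝ := lam₀ / (4 * n) with hεdef
  have hn' : (0:ℝ) < n := by exact_mod_cast hn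
  have hε0 : 0 < ε := by rw [hεdef]; positivity
  set q : ℝ := 2 * Real.exp (-(M : ℝ) * ε ^ 2 / (2 * B ^ 2)) with hqdef
  set Bad : Fin n → Fin n → Set (Fin M → Fin d → ℝ) :=
    fun i j => {W | (M : ℝ) * ε ≤ |∑ r, g i j (W r)|} with hBadDef
  have hbad : ∀ i j, gaussInit M d (Bad i j) ≤ ENNReal.ofReal q := by
    intro i j
    exact hoeffding_two_sided ν M (g i j) (hgm i j) hB (hgB i j) (hgmean i j) hε0.le
  -- union bound
  set Good : Set (Fin M → Fin d → ℝ) := ⋂ i, ⋂ j, (Bad i j)ᶜ with hGoodDef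
  have hcompl : gaussInit M d Goodᶜ ≤ ENNReal.ofReal (δ / 2) := by
    have hGc : Goodᶜ = ⋃ i, ⋃ j, Bad i j := by
      rw [hGoodDef]
      simp [Set.compl_iInter]
    rw [hGc]
    calc gaussInit M d (⋃ i, ⋃ j, Bad i j)
        ≤ ∑' i : Fin n, gaussInit M d (⋃ j, Bad i j) := measure_iUnion_le _
      _ ≤ ∑' i : Fin n, ∑' j : Fin n, gaussInit M d (Bad i j) :=
          ENNReal.tsum_le_tsum fun i => measure_iUnion_le _
      _ ≤ ∑' i : Fin n, ∑' _j : Fin n, ENNReal.ofReal q :=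
          ENNReal.tsum_le_tsum fun i => ENNReal.tsum_le_tsum fun j => hbad i j
      _ = (n : ℝ≥0∞) * ((n : ℝ≥0∞) * ENNReal.ofReal q) := by
          simp [tsum_fintype, Finset.sum_const, nsmul_eq_mul]
      _ ≤ ENNReal.ofReal (δ / 2) := by
          rw [← ENNReal.ofReal_natCast n, ← ENNReal.ofReal_mul (by positivity),
            ← ENNReal.ofReal_mul (by positivity)]
          apply ENNReal.ofReal_le_ofReal
          -- the key arithmetic
          have hlogpos : 0 < Real.log (2 * n / δ) := by
            apply Real.log_pos
            rw [lt_div_iff₀ hδ0]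
            have hn1 : (1:ℝ) ≤ (n:ℝ) := by exact_mod_cast hn
            nlinarith
          set L : ℝ := Real.log (2 * n / δ) with hLdef
          have h1 : 64 * B ^ 2 * (n:ℝ) ^ 2 * L ≤ (M:ℝ) * lam₀ ^ 2 := by
            rw [div_le_iff₀ (by positivity)] at hM
            calc 64 * B ^ 2 * (n:ℝ) ^ 2 * L
                = 256 * (ℓ ^ 2 + 1) ^ 2 * (n:ℝ) ^ 2 * L := by rw [hBdef]; ring
              _ ≤ (M:ℝ) * lam₀ ^ 2 := hM
          have hε2 : ε ^ 2 = lam₀ ^ 2 / (16 * (n:ℝ) ^ 2) := by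
            rw [hεdef, div_pow]
            congr 1
            ring
          have hA : 2 * L ≤ (M:ℝ) * ε ^ 2 / (2 * B ^ 2) := by
            rw [hε2, le_div_iff₀ (by positivity), mul_div_assoc',
              le_div_iff₀ (by positivity)]
            calc 2 * L * (2 * B ^ 2) * (16 * (n:ℝ) ^ 2)
                = 64 * B ^ 2 * (n:ℝ) ^ 2 * L := by ring
              _ ≤ (M:ℝ) * lam₀ ^ 2 := h1
          have hloglog : Real.log (4 * (n:ℝ) ^ 2 / δ) ≤ 2 * L := by
            have h4 : (0:ℝ) < 4 * (n:ℝ) ^ 2 / δ := by positivity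
            have hle : 4 * (n:ℝ) ^ 2 / δ ≤ (2 * n / δ) ^ 2 := by
              rw [div_pow, div_le_div_iff₀ hδ0 (by positivity)]
              have hδsq : δ ^ 2 ≤ δ := by nlinarith
              nlinarith [mul_le_mul_of_nonneg_left hδsq
                (show (0:ℝ) ≤ 4 * (n:ℝ) ^ 2 by positivity)]
            calc Real.log (4 * (n:ℝ) ^ 2 / δ) ≤ Real.log ((2 * n / δ) ^ 2) :=
                  Real.log_le_log h4 hle
              _ = 2 * L := by rw [hLdef, Real.log_pow]; norm_num
          have hexp : Real.exp (-(M:ℝ) * ε ^ 2 / (2 * B ^ 2)) ≤ δ / (4 * (n:ℝ) ^ 2) := by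
            have hpos : (0:ℝ) < δ / (4 * (n:ℝ) ^ 2) := by positivity
            rw [← Real.exp_log hpos]
            apply Real.exp_le_exp.2
            have hloginv : Real.log (δ / (4 * (n:ℝ) ^ 2))
                = - Real.log (4 * (n:ℝ) ^ 2 / δ) := by
              rw [← Real.log_inv, inv_div]
            rw [hloginv]
            have : -(M:ℝ) * ε ^ 2 / (2 * B ^ 2) = -((M:ℝ) * ε ^ 2 / (2 * B ^ 2)) := by ring
            rw [this]
            apply neg_le_neg
            linarith
          calc (n:ℝ) * ((n:ℝ) * q) = 2 * (n:ℝ) ^ 2 * Real.exp (-(M:ℝ) * ε ^ 2 / (2 * B ^ 2)) := by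
                rw [hqdef]; ring
            _ ≤ 2 * (n:ℝ) ^ 2 * (δ / (4 * (n:ℝ) ^ 2)) := by
                apply mul_le_mul_of_nonneg_left hexp (by positivity)
            _ = δ / 2 := by
                rw [← mul_div_assoc, div_eq_div_iff (by positivity) (two_ne_zero)]
                ring
  -- Good implies the eigenvalue bound
  have hlogpos : 0 < Real.log (2 * n / δ) := by
    apply Real.log_pos
    rw [lt_div_iff₀ hδ0]
    have hn1 : (1:ℝ) ≤ (n:ℝ) := by exact_mod_cast hn
    nlinarith
  have hMpos : (0:ℝ) < M :=
    lt_of_lt_of_le (by positivity) hM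
  have hGram : ∀ (W : Fin M → Fin d → ℝ) (i j : Fin n),
      gramNTK M d n σ' x W i j = (M:ℝ)⁻¹ * ∑ r, φ i j (W r) := fun W i j => rfl
  have hGoodSub : Good ⊆ {W | ∀ v : Fin n → ℝ,
      (3 / 4 : ℝ) * lam₀ * ∑ i, v i ^ 2 ≤ v ⬝ᵥ (gramNTK M d n σ' x W).mulVec v} := by
    intro W hW
    simp only [Set.mem_setOf_eq]
    intro v
    have hdiff : ∀ i j, |gramNTK M d n σ' x W i j - K i j| ≤ ε := by
      intro i j
      have hWij : W ∈ (Bad i j)ᶜ := Set.mem_iInter.1 (Set.mem_iInter.1 hW i) j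
      have hlt : |∑ r, g i j (W r)| < (M : ℝ) * ε := by
        rw [hBadDef] at hWij
        simp only [Set.mem_compl_iff, Set.mem_setOf_eq, not_le] at hWij
        exact hWij
      have hGij : gramNTK M d n σ' x W i j - K i j = (M:ℝ)⁻¹ * ∑ r, g i j (W r) := by
        rw [hGram, hgdef]
        simp only [Finset.sum_sub_distrib, Finset.sum_const, Finset.card_univ,
          Fintype.card_fin, nsmul_eq_mul]
        rw [mul_sub]
        have : (M:ℝ)⁻¹ * ((M:ℝ) * K i j) = K i j := by
          rw [← mul_assoc, inv_mul_cancel₀ hMpos.ne', one_mul]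
        rw [this]
      rw [hGij, abs_mul, abs_inv, abs_of_pos hMpos, inv_mul_le_iff₀ hMpos]
      nlinarith [hlt.le]
    have expandG : v ⬝ᵥ (gramNTK M d n σ' x W).mulVec v
        = ∑ i, ∑ j, v i * (gramNTK M d n σ' x W i j * v j) := by
      simp [dotProduct, mulVec, Finset.mul_sum]
    have expandK : v ⬝ᵥ (ntkKernel d n σ' x).mulVec v
        = ∑ i, ∑ j, v i * (ntkKernel d n σ' x i j * v j) := by
      simp [dotProduct, mulVec, Finset.mul_sum]
    have key : v ⬝ᵥ (gramNTK M d n σ' x W).mulVec v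
        = v ⬝ᵥ (ntkKernel d n σ' x).mulVec v
          + ∑ i, ∑ j, v i * v j * (gramNTK M d n σ' x W i j - K i j) := by
      rw [expandG, expandK, ← Finset.sum_add_distrib]
      apply Finset.sum_congr rfl
      intro i _
      rw [← Finset.sum_add_distrib]
      apply Finset.sum_congr rfl
      intro j _
      rw [hKeq]
      ring
    have hterm : ∀ i j, -(|v i| * |v j| * ε)
        ≤ v i * v j * (gramNTK M d n σ' x W i j - K i j) := by
      intro i j
      have h1 : |v i * v j * (gramNTK M d n σ' x W i j - K i j)| ≤ |v i| * |v j| * ε := by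
        rw [abs_mul, abs_mul]
        exact mul_le_mul_of_nonneg_left (hdiff i j) (by positivity)
      linarith [neg_abs_le (v i * v j * (gramNTK M d n σ' x W i j - K i j))]
    have h2 : ∑ i, ∑ j, |v i| * |v j| * ε = ε * (∑ i, |v i|) ^ 2 := by
      calc ∑ i, ∑ j, |v i| * |v j| * ε = ∑ i, |v i| * (∑ j, |v j|) * ε := by
            apply Finset.sum_congr rfl
            intro i _
            rw [← Finset.sum_mul, ← Finset.mul_sum]
        _ = (∑ i, |v i|) * (∑ j, |v j|) * ε := by rw [← Finset.sum_mul, ← Finset.sum_mul]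
        _ = ε * (∑ i, |v i|) ^ 2 := by rw [sq]; ring
    have hsumlow : -(ε * (∑ i, |v i|) ^ 2)
        ≤ ∑ i, ∑ j, v i * v j * (gramNTK M d n σ' x W i j - K i j) := by
      calc -(ε * (∑ i, |v i|) ^ 2) = ∑ i, ∑ j, -(|v i| * |v j| * ε) := by
            rw [← h2, ← Finset.sum_neg_distrib]
            apply Finset.sum_congr rfl
            intro i _
            rw [Finset.sum_neg_distrib]
        _ ≤ _ := Finset.sum_le_sum fun i _ => Finset.sum_le_sum fun j _ => hterm i j
    have hCS : (∑ i, |v i|) ^ 2 ≤ (n:ℝ) * ∑ i, v i ^ 2 := by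
      have h3 := sq_sum_le_card_mul_sum_sq (s := (Finset.univ : Finset (Fin n)))
        (f := fun i => |v i|)
      simpa [sq_abs] using h3
    have hεbound : ε * (∑ i, |v i|) ^ 2 ≤ lam₀ / 4 * ∑ i, v i ^ 2 := by
      calc ε * (∑ i, |v i|) ^ 2 ≤ ε * ((n:ℝ) * ∑ i, v i ^ 2) :=
            mul_le_mul_of_nonneg_left hCS hε0.le
        _ = lam₀ / 4 * ∑ i, v i ^ 2 := by
            rw [hεdef]
            field_simp
    have hKform := hK v
    linarith [key, hsumlow, hεbound, hKform]
  -- conclude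
  calc ENNReal.ofReal (1 - δ / 2)
      = 1 - ENNReal.ofReal (δ / 2) := by
        rw [← ENNReal.ofReal_one, ← ENNReal.ofReal_sub _ (by positivity)]
    _ ≤ gaussInit M d Good := by
        rw [tsub_le_iff_right]
        calc (1:ℝ≥0∞) = gaussInit M d Set.univ := (measure_univ).symm
          _ ≤ gaussInit M d (Good ∪ Goodᶜ) := by rw [Set.union_compl_self]
          _ ≤ gaussInit M d Good + gaussInit M d Goodᶜ := measure_union_le _ _
          _ ≤ gaussInit M d Good + ENNReal.ofReal (δ / 2) := add_le_add le_rfl hcompl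
    _ ≤ _ := measure_mono hGoodSub
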